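/- There does not exist an infinite reduction sequence U'₁ →_{R_S} U'₂ →_{R_S} U'₃ →_{R_S} ⋯ of words from B⁺ such that φ(U'₁) = φ(U'₂) = φ(U'₃) = ⋯. -/

import Mathlib

/-- A rewriting system: every rule has nonempty left- and right-hand sides. -/
def IsRWS {α : Type*} (R : Set (List α × List α)) : Prop :=
  ∀ r ∈ R, r.1 ≠ [] ∧ r.2 ≠ []

/-- One-step reduction `W₁ →_R W₂`. -/
def Step {α : Type*} (R : Set (List α × List α)) (W₁ W₂ : List α) : Prop :=
  ∃ Z₁ Z₂ X Y, (X, Y) ∈ R ∧ W₁ = Z₁ ++ X ++ Z₂ ∧ W₂ = Z₁ ++ Y ++ Z₂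

/-- `→*_R`: the reflexive-transitive closure of one-step reduction. -/
def Steps {α : Type*} (R : Set (List α × List α)) : List α → List α → Prop :=
  Relation.ReflTransGen (Step R)

/-- Noetherian: no infinite reduction sequence. -/
def Noetherian {α : Type*} (R : Set (List α × List α)) : Prop :=
  ¬ ∃ g : ℕ → List α, ∀ i, Step R (g i) (g (i + 1))

/-- Confluence. -/
def Confluent {α : Type*} (R : Set (List α × List α)) : Prop :=
  ∀ U V W, Steps R U V → Steps R U W → ∃ X, Steps R V X ∧ Steps R W X

/-- Complete rewriting system: Noetherian and confluent. -/
def CompleteRWS {α : Type*} (R : Set (List α × List α)) : Prop :=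
  Noetherian R ∧ Confluent R

/-- `Irr R W`: `W ∈ A⁺` has no factor which is the left-hand side of a rule. -/
def Irr {α : Type*} (R : Set (List α × List α)) (W : List α) : Prop :=
  W ≠ [] ∧ ¬ ∃ Z₁ X Z₂, (∃ Y, (X, Y) ∈ R) ∧ W = Z₁ ++ X ++ Z₂

/-- `Presents R f`: the map sending a nonempty word `u` over `α` to `f u` exhibits the
semigroup `S` as the semigroup presented by `[α; R]`, i.e. the semigroup `A⁺/↔*_R`:
`f` restricted to nonempty words is a surjective semigroup homomorphism whose kernel
is the congruence `↔*_R` generated by `R` (the value of `f` on the empty word is irrelevant). -/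
def Presents {α S : Type*} [Semigroup S] (R : Set (List α × List α)) (f : List α → S) : Prop :=
  (∀ u v : List α, u ≠ [] → v ≠ [] → f (u ++ v) = f u * f v) ∧
  (∀ x : S, ∃ u : List α, u ≠ [] ∧ f u = x) ∧
  (∀ u v : List α, u ≠ [] → v ≠ [] → (f u = f v ↔ Relation.EqvGen (Step R) u v))

/-- `S` has a finite complete rewriting system. -/
def HasFCRS (S : Type*) [Semigroup S] : Prop :=
  ∃ (α : Type) (R : Set (List α × List α)) (f : List α → S),
    Finite α ∧ R.Finite ∧ IsRWS R ∧ CompleteRWS R ∧ Presents R f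

/-! ### The construction of Section 3: adjoining a letter `s` with `φ(s) = W₀`.
The alphabet `B = A ∪ {s}` is modelled as `α ⊕ Unit`, with `Sum.inl a` the letter
`a ∈ A` and `Sum.inr ()` the new letter `s`. -/

/-- The homomorphism `φ : B* → A*` with `φ(a) = a` for `a ∈ A` and `φ(s) = W₀`. -/
def phiS {α : Type*} (W₀ : List α) (l : List (α ⊕ Unit)) : List α :=
  l.flatMap (Sum.elim (fun a => [a]) (fun _ => W₀))

open scoped Classical in
/-- The function `ρ : A* → B*`: `ρ(ε) = ε`; if `W = X₁W₀` ends with `W₀` then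
`ρ(W) = ρ(X₁)s`; otherwise `W = X₂a` with `a ∈ A` and `ρ(W) = ρ(X₂)a`. -/
noncomputable def rhoS {α : Type*} (W₀ : List α) (W : List α) : List (α ⊕ Unit) :=
  if hW : W = [] then []
  else if h : W₀ ≠ [] ∧ W₀ <:+ W then
    rhoS W₀ (W.take (W.length - W₀.length)) ++ [Sum.inr ()]
  else
    rhoS W₀ W.dropLast ++ [Sum.inl (W.getLast hW)]
termination_by W.length
decreasing_by
  · have h1 : W₀.length ≤ W.length := h.2.length_le
    have h2 : 0 < W₀.length := List.length_pos_iff.mpr h.1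
    simp only [List.length_take]
    omega
  · have h3 : 0 < W.length := List.length_pos_iff.mpr hW
    simp only [List.length_dropLast]
    omega

/-- Rules of the form (C1): `ρ(X) → ρ(Y)` for each rule `X → Y` of `R`. -/
def C1 {α : Type*} (R : Set (List α × List α)) (W₀ : List α) :
    Set (List (α ⊕ Unit) × List (α ⊕ Unit)) :=
  {p | ∃ X Y : List α, (X, Y) ∈ R ∧ p = (rhoS W₀ X, rhoS W₀ Y)}

/-- The rule (C2): `W₀ → s`. -/
def C2 {α : Type*} (W₀ : List α) : Set (List (α ⊕ Unit) × List (α ⊕ Unit)) :=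
  {p | p = (W₀.map Sum.inl, [Sum.inr ()])}

/-- Rules of the form (C3): for each rule `X₁X₂ → Y₁` of `R` with `W₀ = Z₁X₁`
(`X₁, Y₁ ∈ A⁺`, `X₂, Z₁ ∈ A*`), the rule `ρ(Z₁X₁X₂) → ρ(Y₁')` where
`Z₁X₁X₂ →*_R Y₁' ∈ Irr(R)`. -/
def C3 {α : Type*} (R : Set (List α × List α)) (W₀ : List α) :
    Set (List (α ⊕ Unit) × List (α ⊕ Unit)) :=
  {p | ∃ X₁ X₂ Y₁ Z₁ Y₁' : List α, X₁ ≠ [] ∧ Y₁ ≠ [] ∧ (X₁ ++ X₂, Y₁) ∈ R ∧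
    W₀ = Z₁ ++ X₁ ∧ Steps R (Z₁ ++ X₁ ++ X₂) Y₁' ∧ Irr R Y₁' ∧
    p = (rhoS W₀ (Z₁ ++ X₁ ++ X₂), rhoS W₀ Y₁')}

/-- Rules of the form (C4): for each rule `X₂X₁ → Y₁` of `R` with `W₀ = X₁Z₁`
(`X₁, Y₁ ∈ A⁺`, `X₂, Z₁ ∈ A*`), the rule `ρ(X₂X₁Z₁) → ρ(Y₁')` where
`X₂X₁Z₁ →*_R Y₁' ∈ Irr(R)`. -/
def C4 {α : Type*} (R : Set (List α × List α)) (W₀ : List α) :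
    Set (List (α ⊕ Unit) × List (α ⊕ Unit)) :=
  {p | ∃ X₁ X₂ Y₁ Z₁ Y₁' : List α, X₁ ≠ [] ∧ Y₁ ≠ [] ∧ (X₂ ++ X₁, Y₁) ∈ R ∧
    W₀ = X₁ ++ Z₁ ∧ Steps R (X₂ ++ X₁ ++ Z₁) Y₁' ∧ Irr R Y₁' ∧
    p = (rhoS W₀ (X₂ ++ X₁ ++ Z₁), rhoS W₀ Y₁')}

/-- Rules of the form (C5): for each rule `X₂X₃X₄ → Y₁` of `R` with `W₀ = X₄X₅ = X₁X₂`
(`X₂, X₄, Y₁ ∈ A⁺`, `X₁, X₃, X₅ ∈ A*`), the rule `ρ(X₁X₂X₃X₄X₅) → ρ(Y₁')` where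
`X₁X₂X₃X₄X₅ →*_R Y₁' ∈ Irr(R)`. -/
def C5 {α : Type*} (R : Set (List α × List α)) (W₀ : List α) :
    Set (List (α ⊕ Unit) × List (α ⊕ Unit)) :=
  {p | ∃ X₁ X₂ X₃ X₄ X₅ Y₁ Y₁' : List α, X₂ ≠ [] ∧ X₄ ≠ [] ∧ Y₁ ≠ [] ∧
    (X₂ ++ X₃ ++ X₄, Y₁) ∈ R ∧ W₀ = X₄ ++ X₅ ∧ W₀ = X₁ ++ X₂ ∧
    Steps R (X₁ ++ X₂ ++ X₃ ++ X₄ ++ X₅) Y₁' ∧ Irr R Y₁' ∧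
    p = (rhoS W₀ (X₁ ++ X₂ ++ X₃ ++ X₄ ++ X₅), rhoS W₀ Y₁')}

/-- Rules of the form (C6): `sX₃ → X₁s` whenever `W₀ = X₁X₂ = X₂X₃` with
`X₁, X₂, X₃ ∈ A⁺`. -/
def C6 {α : Type*} (W₀ : List α) : Set (List (α ⊕ Unit) × List (α ⊕ Unit)) :=
  {p | ∃ X₁ X₂ X₃ : List α, X₁ ≠ [] ∧ X₂ ≠ [] ∧ X₃ ≠ [] ∧
    W₀ = X₁ ++ X₂ ∧ W₀ = X₂ ++ X₃ ∧
    p = (Sum.inr () :: X₃.map Sum.inl, X₁.map Sum.inl ++ [Sum.inr ()])}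

/-- The rewriting system `R_S` over `B = A ∪ {s}`. -/
def RS {α : Type*} (R : Set (List α × List α)) (W₀ : List α) :
    Set (List (α ⊕ Unit) × List (α ⊕ Unit)) :=
  C1 R W₀ ∪ C2 W₀ ∪ C3 R W₀ ∪ C4 R W₀ ∪ C5 R W₀ ∪ C6 W₀

section Aux

variable {α : Type*}

/-- Number of `A`-letters. -/
def aCnt (l : List (α ⊕ Unit)) : ℕ := (l.filter Sum.isLeft).length

/-- Number of `s`-letters. -/
def sCnt (l : List (α ⊕ Unit)) : ℕ := (l.filter Sum.isRight).length

/-- Number of pairs (s, a) with the s strictly before the a. -/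
def pCnt : List (α ⊕ Unit) → ℕ
  | [] => 0
  | Sum.inl _ :: t => pCnt t
  | Sum.inr _ :: t => aCnt t + pCnt t

@[simp] lemma aCnt_nil : aCnt ([] : List (α ⊕ Unit)) = 0 := rfl
@[simp] lemma sCnt_nil : sCnt ([] : List (α ⊕ Unit)) = 0 := rfl
@[simp] lemma aCnt_cons_inl (a : α) (t : List (α ⊕ Unit)) :
    aCnt (Sum.inl a :: t) = aCnt t + 1 := by simp [aCnt, List.filter_cons]
@[simp] lemma aCnt_cons_inr (u : Unit) (t : List (α ⊕ Unit)) :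
    aCnt (Sum.inr u :: t) = aCnt t := by simp [aCnt]
@[simp] lemma sCnt_cons_inl (a : α) (t : List (α ⊕ Unit)) :
    sCnt (Sum.inl a :: t) = sCnt t := by simp [sCnt]
@[simp] lemma sCnt_cons_inr (u : Unit) (t : List (α ⊕ Unit)) :
    sCnt (Sum.inr u :: t) = sCnt t + 1 := by simp [sCnt, List.filter_cons]

@[simp] lemma pCnt_nil : pCnt ([] : List (α ⊕ Unit)) = 0 := rfl
@[simp] lemma pCnt_cons_inl (a : α) (t : List (α ⊕ Unit)) :
    pCnt (Sum.inl a :: t) = pCnt t := rfl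
@[simp] lemma pCnt_cons_inr (u : Unit) (t : List (α ⊕ Unit)) :
    pCnt (Sum.inr u :: t) = aCnt t + pCnt t := rfl

lemma aCnt_append (u v : List (α ⊕ Unit)) : aCnt (u ++ v) = aCnt u + aCnt v := by
  simp [aCnt]

lemma sCnt_append (u v : List (α ⊕ Unit)) : sCnt (u ++ v) = sCnt u + sCnt v := by
  simp [sCnt]

lemma pCnt_append (u v : List (α ⊕ Unit)) :
    pCnt (u ++ v) = pCnt u + pCnt v + sCnt u * aCnt v := by
  induction u with
  | nil => simp [pCnt]
  | cons x t ih =>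
    cases x with
    | inl a => simpa [pCnt] using ih
    | inr u' => simp [pCnt, ih, aCnt_append]; ring

@[simp] lemma aCnt_map_inl (l : List α) : aCnt (l.map Sum.inl : List (α ⊕ Unit)) = l.length := by
  induction l with
  | nil => rfl
  | cons a t ih => simp [ih]

@[simp] lemma sCnt_map_inl (l : List α) : sCnt (l.map Sum.inl : List (α ⊕ Unit)) = 0 := by
  induction l with
  | nil => rfl
  | cons a t ih => simp [ih]

@[simp] lemma pCnt_map_inl (l : List α) : pCnt (l.map Sum.inl : List (α ⊕ Unit)) = 0 := by
  induction l with
  | nil => rfl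
  | cons a t ih => simpa [pCnt] using ih

lemma aCnt_le_length (l : List (α ⊕ Unit)) : aCnt l ≤ l.length :=
  List.length_filter_le _ _

lemma pCnt_le_sq (l : List (α ⊕ Unit)) : pCnt l ≤ l.length * l.length := by
  induction l with
  | nil => simp [pCnt]
  | cons x t ih =>
    cases x with
    | inl a =>
      simp only [pCnt, List.length_cons]
      nlinarith
    | inr u =>
      simp only [pCnt, List.length_cons]
      have := aCnt_le_length t
      nlinarith

lemma phiS_append (W₀ : List α) (u v : List (α ⊕ Unit)) :
    phiS W₀ (u ++ v) = phiS W₀ u ++ phiS W₀ v := by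
  simp [phiS]

@[simp] lemma phiS_map_inl (W₀ : List α) (l : List α) :
    phiS W₀ (l.map Sum.inl) = l := by
  induction l with
  | nil => rfl
  | cons a t ih => simpa [phiS] using ih

@[simp] lemma phiS_inl_singleton (W₀ : List α) (a : α) :
    phiS W₀ [Sum.inl a] = [a] := by simp [phiS]

@[simp] lemma phiS_s (W₀ : List α) : phiS W₀ [Sum.inr ()] = W₀ := by simp [phiS]

lemma phiS_rhoS (W₀ : List α) (W : List α) : phiS W₀ (rhoS W₀ W) = W := by
  rw [rhoS]
  split_ifs with hW h
  · simp [phiS, hW]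
  · rw [phiS_append, phiS_rhoS, phiS_s]
    obtain ⟨t, ht⟩ := h.2
    have hlt : t.length = W.length - W₀.length := by
      have := congrArg List.length ht
      simp at this
      omega
    rw [← hlt, ← ht, List.take_left]
  · rw [phiS_append, phiS_inl_singleton, phiS_rhoS]
    exact List.dropLast_append_getLast hW
termination_by W.length
decreasing_by
  all_goals first
    | (have h1 : W₀.length ≤ W.length := h.2.length_le
       have h2 : 0 < W₀.length := List.length_pos_iff.mpr h.1
       simp only [List.length_take]
       omega)
    | (have h3 : 0 < W.length := List.length_pos_iff.mpr hW
       simp only [List.length_dropLast]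
       omega)

/-- The key step lemma: a φ-preserving `R_S`-step either strictly decreases length,
or preserves length and strictly decreases `pCnt`. -/
lemma key_step {α : Type*} {R : Set (List α × List α)} (hcomp : CompleteRWS R)
    {W₀ : List α} (hW₀len : 1 < W₀.length) {U V : List (α ⊕ Unit)}
    (hstep : Step (RS R W₀) U V) (hphi : phiS W₀ V = phiS W₀ U) :
    V.length < U.length ∨ (V.length = U.length ∧ pCnt V < pCnt U) := by
  obtain ⟨Z₁, Z₂, X', Y', hmem, hU, hV⟩ := hstep
  have hXY : phiS W₀ Y' = phiS W₀ X' := by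
    rw [hU, hV, phiS_append, phiS_append, phiS_append, phiS_append] at hphi
    exact List.append_cancel_left (List.append_cancel_right hphi)
  rcases hmem with (((((h | h) | h) | h) | h) | h)
  · -- C1
    exfalso
    obtain ⟨X, Y, hR, hp⟩ := h
    rw [Prod.mk.injEq] at hp
    have hXeqY : Y = X := by
      rw [hp.1, hp.2, phiS_rhoS, phiS_rhoS] at hXY
      exact hXY
    exact hcomp.1 ⟨fun _ => X, fun i =>
      ⟨[], [], X, X, hXeqY ▸ hR, by simp, by simp⟩⟩
  · -- C2
    left
    have h' : (X', Y') = (W₀.map Sum.inl, [Sum.inr ()]) := h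
    have hp : X' = W₀.map Sum.inl ∧ Y' = [Sum.inr ()] :=
      ⟨congrArg Prod.fst h', congrArg Prod.snd h'⟩
    rw [hU, hV, hp.1, hp.2]
    simp
    omega
  · -- C3
    exfalso
    obtain ⟨X₁, X₂, Y₁, Z₃, Y₁', hX₁, hY₁, hR, hW₀eq, hsteps, hirr, hp⟩ := h
    rw [Prod.mk.injEq] at hp
    have : Y₁' = Z₃ ++ X₁ ++ X₂ := by
      rw [hp.1, hp.2, phiS_rhoS, phiS_rhoS] at hXY
      exact hXY
    exact hirr.2 ⟨Z₃, X₁ ++ X₂, [], ⟨Y₁, hR⟩, by rw [this]; simp⟩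
  · -- C4
    exfalso
    obtain ⟨X₁, X₂, Y₁, Z₃, Y₁', hX₁, hY₁, hR, hW₀eq, hsteps, hirr, hp⟩ := h
    rw [Prod.mk.injEq] at hp
    have : Y₁' = X₂ ++ X₁ ++ Z₃ := by
      rw [hp.1, hp.2, phiS_rhoS, phiS_rhoS] at hXY
      exact hXY
    exact hirr.2 ⟨[], X₂ ++ X₁, Z₃, ⟨Y₁, hR⟩, by rw [this]; simp⟩
  · -- C5
    exfalso
    obtain ⟨X₁, X₂, X₃, X₄, X₅, Y₁, Y₁', hX₂, hX₄, hY₁, hR, hW₀eq1, hW₀eq2,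
      hsteps, hirr, hp⟩ := h
    rw [Prod.mk.injEq] at hp
    have : Y₁' = X₁ ++ X₂ ++ X₃ ++ X₄ ++ X₅ := by
      rw [hp.1, hp.2, phiS_rhoS, phiS_rhoS] at hXY
      exact hXY
    exact hirr.2 ⟨X₁, X₂ ++ X₃ ++ X₄, X₅, ⟨Y₁, hR⟩, by rw [this]; simp⟩
  · -- C6
    right
    obtain ⟨X₁, X₂, X₃, hX₁, hX₂, hX₃, hW1, hW2, hp⟩ := h
    rw [Prod.mk.injEq] at hp
    have hlen13 : X₁.length = X₃.length := by
      have h1 := congrArg List.length hW1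
      have h2 := congrArg List.length hW2
      simp at h1 h2
      omega
    have hX₃pos : 0 < X₃.length := List.length_pos_iff.mpr hX₃
    constructor
    · rw [hU, hV, hp.1, hp.2]
      simp
      omega
    · rw [hU, hV, hp.1, hp.2]
      simp only [pCnt_append, sCnt_append, aCnt_append, pCnt_cons_inr, pCnt_cons_inl,
        aCnt_cons_inr, aCnt_cons_inl, sCnt_cons_inr, sCnt_cons_inl,
        pCnt_nil, aCnt_nil, sCnt_nil, pCnt_map_inl, aCnt_map_inl, sCnt_map_inl,
        hlen13, Nat.mul_add, Nat.add_mul]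
      omega

end Aux

/-- **Lemma 3.7** (Property (P3)). There is no infinite reduction sequence
`U'₁ →_{R_S} U'₂ →_{R_S} ⋯` of words from `B⁺` with `φ(U'₁) = φ(U'₂) = ⋯`. -/
theorem lemma_3_7 {α : Type*} (R : Set (List α × List α))
    (hαfin : Finite α) (hRfin : R.Finite) (hRWS : IsRWS R) (hcomp : CompleteRWS R)
    (W₀ : List α) (hW₀len : 1 < W₀.length) (hW₀irr : Irr R W₀) :
    ¬ ∃ g : ℕ → List (α ⊕ Unit), (∀ i, g i ≠ []) ∧
      (∀ i, Step (RS R W₀) (g i) (g (i + 1))) ∧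
      (∀ i, phiS W₀ (g (i + 1)) = phiS W₀ (g i)) := by
  rintro ⟨g, hne, hstep, hphi⟩
  have hkey : ∀ i, (g (i+1)).length < (g i).length ∨
      ((g (i+1)).length = (g i).length ∧ pCnt (g (i+1)) < pCnt (g i)) :=
    fun i => key_step hcomp hW₀len (hstep i) (hphi i)
  have hle : ∀ i, (g i).length ≤ (g 0).length := by
    intro i
    induction i with
    | zero => exact le_refl _
    | succ n ih =>
      rcases hkey n with h | h
      · omega
      · omega
  obtain ⟨K, hK⟩ : ∃ K : ℕ, K = (g 0).length * (g 0).length + 1 := ⟨_, rfl⟩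
  set μ : ℕ → ℕ := fun i => K * (g i).length + pCnt (g i) with hμ
  have hdec : ∀ i, μ (i+1) < μ i := by
    intro i
    rcases hkey i with h | ⟨h1, h2⟩
    · have hp : pCnt (g (i+1)) ≤ (g (i+1)).length * (g (i+1)).length := pCnt_le_sq _
      have hb : (g (i+1)).length ≤ (g 0).length := hle (i+1)
      have hb2 : (g (i+1)).length * (g (i+1)).length ≤ (g 0).length * (g 0).length :=
        Nat.mul_le_mul hb hb
      have hKe : pCnt (g (i+1)) + 1 ≤ K := by omega
      simp only [hμ]
      calc K * (g (i+1)).length + pCnt (g (i+1))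
          < K * (g (i+1)).length + K := by omega
        _ = K * ((g (i+1)).length + 1) := (Nat.mul_succ K _).symm
        _ ≤ K * (g i).length := Nat.mul_le_mul_left _ (by omega)
        _ ≤ K * (g i).length + pCnt (g i) := Nat.le_add_right _ _
    · simp only [hμ, h1]
      omega
  have hbound : ∀ n, μ n + n ≤ μ 0 := by
    intro n
    induction n with
    | zero => simp
    | succ m ih =>
      have := hdec m
      omega
  have := hbound (μ 0 + 1)
  omega
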